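/- There is no infinite descending chain under the coded membership relation ∈̃: if (aₙ) is a sequence of codes with aₙ₊₁ ∈̃ aₙ for all n, a contradiction follows. Equivalently, the relation ∈̃ on codes is well-founded modulo the congruence ≈. -/

import Mathlib

open Ordinal

/-- The field of a binary relation on ordinals (domain ∪ range),
where `r γ β` means `γ` is an `r`-predecessor of `β`. -/
def fld (r : Ordinal → Ordinal → Prop) : Set Ordinal :=
  {x | (∃ y, r x y) ∨ (∃ y, r y x)}

/-- Well-foundedness in the sense of SO: every nonempty subset of the field
contains an element with no `r`-predecessor inside the subset. -/
def IsWFd (r : Ordinal → Ordinal → Prop) : Prop :=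
  ∀ b : Set Ordinal, b ⊆ fld r → b.Nonempty → ∃ β ∈ b, ∀ α ∈ b, ¬ r α β

/-- Extensionality: elements of the field with equal sets of
`r`-predecessors are equal. -/
def IsExt (r : Ordinal → Ordinal → Prop) : Prop :=
  ∀ α ∈ fld r, ∀ β ∈ fld r, {γ | r γ α} = {γ | r γ β} → α = β

/-- `τ` is a top element of `r`: every element of the field is reachable
from `τ` by a finite descending `r`-chain. -/
def CTop (r : Ordinal → Ordinal → Prop) (τ : Ordinal) : Prop :=
  τ ∈ fld r ∧ ∀ x ∈ fld r, Relation.ReflTransGen r x τ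

/-- `β` is a bottom element of `r`: it lies in the field and has no
`r`-predecessors. -/
def IsBot' (r : Ordinal → Ordinal → Prop) (β : Ordinal) : Prop :=
  β ∈ fld r ∧ ∀ γ, ¬ r γ β

/-- A code: a nonempty, well-founded, extensional binary relation on
ordinals with a unique top element, whose bottom elements have a unique
successor. -/
def Code (r : Ordinal → Ordinal → Prop) : Prop :=
  (fld r).Nonempty ∧ IsWFd r ∧ IsExt r ∧ (∃! τ, CTop r τ) ∧
    ∀ β, IsBot' r β → ∃! γ, r β γ

/-- `cut r β`: the restriction of `r` to elements reachable from `β`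
by finite descending chains. -/
def cut (r : Ordinal → Ordinal → Prop) (β : Ordinal) :
    Ordinal → Ordinal → Prop :=
  fun x y => r x y ∧ Relation.ReflTransGen r x β ∧ Relation.ReflTransGen r y β

/-- `f` is a relation-preserving map (morphism) from `a` to `b`. -/
def Mor (f : Ordinal → Ordinal) (a b : Ordinal → Ordinal → Prop) : Prop :=
  (∀ x ∈ fld a, f x ∈ fld b) ∧ ∀ x y, a x y → b (f x) (f y)

/-- `(f, g)` is a pair of mutually inverse morphisms between `a` and `b`. -/
def IsoPair (f g : Ordinal → Ordinal) (a b : Ordinal → Ordinal → Prop) : Prop :=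
  Mor f a b ∧ Mor g b a ∧ (∀ x ∈ fld a, g (f x) = x) ∧ (∀ y ∈ fld b, f (g y) = y)

/-- `a ≈ b`: the codes `a` and `b` are isomorphic. -/
def CodeIso (a b : Ordinal → Ordinal → Prop) : Prop :=
  ∃ f g, IsoPair f g a b

/-- The coded membership relation: `a ∈̃ b`. -/
def CMem (a b : Ordinal → Ordinal → Prop) : Prop :=
  Code b ∧ ∃ τ β, CTop b τ ∧ b β τ ∧ CodeIso a (cut b β)

/-- `π` is a Mostowski collapse of `r` (on its field):
`π β = {π γ : γ r β}` for every `β` in the field. -/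
def IsCollapse (r : Ordinal → Ordinal → Prop) (π : Ordinal → ZFSet) : Prop :=
  ∀ β ∈ fld r, ∀ z : ZFSet, z ∈ π β ↔ ∃ γ, r γ β ∧ π γ = z


section Aux

variable {r p q a b c : Ordinal → Ordinal → Prop}

lemma mem_fld_left {x y : Ordinal} (h : r x y) : x ∈ fld r := Or.inl ⟨y, h⟩
lemma mem_fld_right {x y : Ordinal} (h : r x y) : y ∈ fld r := Or.inr ⟨x, h⟩

lemma code_wf (h : Code r) : WellFounded r := by
  rw [WellFounded.wellFounded_iff_has_min]
  intro s hs
  by_cases hsub : s ⊆ fld r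
  · exact h.2.1 s hsub hs
  · obtain ⟨m, hm, hmf⟩ := Set.not_subset.mp hsub
    exact ⟨m, hm, fun x hx hr => hmf (mem_fld_right hr)⟩

lemma rtg_of_cut {β x y : Ordinal} (h : Relation.ReflTransGen (cut r β) x y) :
    Relation.ReflTransGen r x y :=
  Relation.ReflTransGen.mono (fun _ _ hh => hh.1) _ _ h

lemma rtg_cut {β γ x : Ordinal} (hγβ : Relation.ReflTransGen r γ β)
    (hx : Relation.ReflTransGen r x γ) : Relation.ReflTransGen (cut r β) x γ := by
  induction hx using Relation.ReflTransGen.head_induction_on with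
  | refl => exact Relation.ReflTransGen.refl
  | head h' hcb ih =>
      exact Relation.ReflTransGen.head
        ⟨h', (Relation.ReflTransGen.head h' hcb).trans hγβ, hcb.trans hγβ⟩ ih

lemma cut_cut {β γ : Ordinal} (hγβ : Relation.ReflTransGen r γ β) :
    cut (cut r β) γ = cut r γ := by
  funext x y
  apply propext
  constructor
  · rintro ⟨⟨hxy, _, _⟩, hx, hy⟩
    exact ⟨hxy, rtg_of_cut hx, rtg_of_cut hy⟩
  · rintro ⟨hxy, hx, hy⟩
    exact ⟨⟨hxy, hx.trans hγβ, hy.trans hγβ⟩, rtg_cut hγβ hx, rtg_cut hγβ hy⟩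

lemma fld_map {f : Ordinal → Ordinal} (h : ∀ x y, p x y → q (f x) (f y))
    {x : Ordinal} (hx : x ∈ fld p) : f x ∈ fld q := by
  rcases hx with ⟨y, hy⟩ | ⟨y, hy⟩
  · exact Or.inl ⟨f y, h _ _ hy⟩
  · exact Or.inr ⟨f y, h _ _ hy⟩

lemma fld_cut_sub {β x : Ordinal} (hx : x ∈ fld (cut r β)) : x ∈ fld r := by
  rcases hx with ⟨y, hy⟩ | ⟨y, hy⟩
  · exact Or.inl ⟨y, hy.1⟩
  · exact Or.inr ⟨y, hy.1⟩

lemma isoPair_cut {f g : Ordinal → Ordinal} (h : IsoPair f g a b) {γ : Ordinal}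
    (hγ : γ ∈ fld a) : IsoPair f g (cut a γ) (cut b (f γ)) := by
  obtain ⟨⟨hf1, hf2⟩, ⟨hg1, hg2⟩, hgf, hfg⟩ := h
  have hmapf : ∀ x y, cut a γ x y → cut b (f γ) (f x) (f y) := by
    rintro x y ⟨hxy, hx, hy⟩
    exact ⟨hf2 _ _ hxy, Relation.ReflTransGen.lift f hf2 _ _ hx,
      Relation.ReflTransGen.lift f hf2 _ _ hy⟩
  have hmapg : ∀ x y, cut b (f γ) x y → cut a γ (g x) (g y) := by
    rintro x y ⟨hxy, hx, hy⟩
    have h1 : Relation.ReflTransGen a (g x) (g (f γ)) := Relation.ReflTransGen.lift g hg2 _ _ hx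
    have h2 : Relation.ReflTransGen a (g y) (g (f γ)) := Relation.ReflTransGen.lift g hg2 _ _ hy
    rw [hgf γ hγ] at h1 h2
    exact ⟨hg2 _ _ hxy, h1, h2⟩
  exact ⟨⟨fun x hx => fld_map hmapf hx, hmapf⟩,
    ⟨fun x hx => fld_map hmapg hx, hmapg⟩,
    fun x hx => hgf x (fld_cut_sub hx),
    fun y hy => hfg y (fld_cut_sub hy)⟩

lemma codeIso_trans (h1 : CodeIso a b) (h2 : CodeIso b c) : CodeIso a c := by
  obtain ⟨f, g, ⟨hf1, hf2⟩, ⟨hg1, hg2⟩, hgf, hfg⟩ := h1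
  obtain ⟨f', g', ⟨hf1', hf2'⟩, ⟨hg1', hg2'⟩, hgf', hfg'⟩ := h2
  refine ⟨f' ∘ f, g ∘ g',
    ⟨fun x hx => hf1' _ (hf1 _ hx), fun x y h => hf2' _ _ (hf2 _ _ h)⟩,
    ⟨fun x hx => hg1 _ (hg1' _ hx), fun x y h => hg2 _ _ (hg2' _ _ h)⟩,
    fun x hx => ?_, fun y hy => ?_⟩
  · show g (g' (f' (f x))) = x
    rw [hgf' _ (hf1 _ hx), hgf _ hx]
  · show f' (f (g (g' y))) = y
    rw [hfg _ (hg1' _ hy), hfg' _ hy]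

end Aux

/-- there is no infinite descending chain under the coded
membership relation `∈̃`. -/
theorem cmem_no_infinite_descending_chain
    (a : ℕ → Ordinal → Ordinal → Prop)
    (hcode : ∀ n, Code (a n))
    (hdesc : ∀ n, CMem (a (n + 1)) (a n)) : False := by
  have hwf : WellFounded (a 0) := code_wf (hcode 0)
  have hwft : WellFounded (Relation.TransGen (a 0)) := hwf.transGen
  have key : ∀ n x, CodeIso (a (n+1)) (cut (a 0) x) →
      ∃ y, CodeIso (a (n+2)) (cut (a 0) y) ∧ Relation.TransGen (a 0) y x := by
    intro n x hiso
    obtain ⟨_, τ, γ, hτ, hγτ, hiso2⟩ := hdesc (n+1)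
    obtain ⟨f, g, hpair⟩ := hiso
    have hγ : γ ∈ fld (a (n+1)) := mem_fld_left hγτ
    have hcut : cut (a 0) x (f γ) (f τ) := hpair.1.2 _ _ hγτ
    have hrtg : Relation.ReflTransGen (a 0) (f γ) x := hcut.2.1
    have hne : f γ ≠ x := by
      intro he
      have hloop : Relation.TransGen (a 0) x x :=
        Relation.TransGen.head' (he ▸ hcut.1) hcut.2.2
      exact hwft.isIrrefl.irrefl x hloop
    have hstrict : Relation.TransGen (a 0) (f γ) x := by
      rcases Relation.ReflTransGen.cases_head hrtg with heq | ⟨w, hw1, hw2⟩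
      · exact absurd heq hne
      · exact Relation.TransGen.head' hw1 hw2
    have h1 : CodeIso (cut (a (n+1)) γ) (cut (cut (a 0) x) (f γ)) :=
      ⟨f, g, isoPair_cut hpair hγ⟩
    rw [cut_cut hrtg] at h1
    exact ⟨f γ, codeIso_trans hiso2 h1, hstrict⟩
  obtain ⟨_, τ0, β0, hτ0, hβτ0, hiso0⟩ := hdesc 0
  let F : ∀ n : ℕ, {x : Ordinal // CodeIso (a (n+1)) (cut (a 0) x)} :=
    fun n => Nat.rec ⟨β0, hiso0⟩
      (fun n p => ⟨Classical.choose (key n p.1 p.2),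
        (Classical.choose_spec (key n p.1 p.2)).1⟩) n
  have hdescF : ∀ n, Relation.TransGen (a 0) (F (n+1)).1 (F n).1 :=
    fun n => (Classical.choose_spec (key n (F n).1 (F n).2)).2
  have hne : (Set.range fun n => (F n).1).Nonempty := ⟨(F 0).1, 0, rfl⟩
  obtain ⟨k, hkm⟩ := hwft.min_mem _ hne
  exact hwft.not_lt_min (Set.range fun n => (F n).1) ⟨k+1, rfl⟩
    (by beta_reduce at hkm; exact hkm ▸ hdescF k)
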